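/- In the simplex category Δ, for 0 ≤ k ≤ n the square consisting of the object [n], the subobjects {0,...,k} ≅ [k] and {k,...,n} ≅ [n-k], and their intersection {k} ≅ [0] (with the evident inclusion maps) is both a pullback and a pushout square in Δ (a biCartesian square). -/

import Mathlib

open CategoryTheory Limits

namespace Stmt16Aux

variable (k l : ℕ)

/-- first inclusion -/
def inl : SimplexCategory.mk k ⟶ SimplexCategory.mk (k + l) :=
  SimplexCategory.mkHom ⟨Fin.castLE (Nat.add_le_add_right (Nat.le_add_right k l) 1), fun _ _ h => h⟩

/-- second inclusion -/
def inr : SimplexCategory.mk l ⟶ SimplexCategory.mk (k + l) :=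
  SimplexCategory.mkHom
    ⟨fun i : Fin (l + 1) => (⟨k + (i : ℕ), Nat.add_lt_add_left i.isLt k⟩ : Fin (k + l + 1)),
      fun a b hab => Nat.add_le_add_left hab k⟩

lemma apply_comp {a b c : SimplexCategory} (f : a ⟶ b) (g : b ⟶ c) (i) :
    (f ≫ g).toOrderHom i = g.toOrderHom (f.toOrderHom i) := rfl

lemma hom_congr {a b : SimplexCategory} {f g : a ⟶ b} (h : f = g) (i) :
    f.toOrderHom i = g.toOrderHom i := by rw [h]

lemma comm :
    SimplexCategory.const (SimplexCategory.mk 0) (SimplexCategory.mk k) (Fin.last k) ≫ inl k l =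
    SimplexCategory.const (SimplexCategory.mk 0) (SimplexCategory.mk l) 0 ≫ inr k l := by
  apply SimplexCategory.Hom.ext
  ext i
  show ((Fin.last k).castLE (by omega : k + 1 ≤ k + l + 1) : ℕ) = k + ((0 : Fin (l + 1)) : ℕ)
  simp [Fin.last]

lemma point_eq {X : SimplexCategory} {a : Fin (k+1)} {b : Fin (l+1)}
    (u : SimplexCategory.mk k ⟶ X) (v : SimplexCategory.mk l ⟶ X)
    (h : SimplexCategory.const (SimplexCategory.mk 0) (SimplexCategory.mk k) a ≫ u =
      SimplexCategory.const (SimplexCategory.mk 0) (SimplexCategory.mk l) b ≫ v) :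
    u.toOrderHom a = v.toOrderHom b :=
  hom_congr h (0 : Fin 1)

/-- descent of a compatible pair -/
def desc {X : SimplexCategory} (u : SimplexCategory.mk k ⟶ X) (v : SimplexCategory.mk l ⟶ X)
    (huv : u.toOrderHom (Fin.last k) = v.toOrderHom 0) :
    SimplexCategory.mk (k + l) ⟶ X :=
  SimplexCategory.Hom.mk
    { toFun := fun i =>
        if h : (i : ℕ) ≤ k then u.toOrderHom ⟨(i : ℕ), by show (i : ℕ) < k + 1; omega⟩
        else v.toOrderHom ⟨(i : ℕ) - k, by
          show (i : ℕ) - k < l + 1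
          have hi : (i : ℕ) < k + l + 1 := i.isLt
          omega⟩
      monotone' := by
        intro a b hab
        have hab' : (a : ℕ) ≤ b := hab
        by_cases ha : (a : ℕ) ≤ k <;> by_cases hb : (b : ℕ) ≤ k
        · simp only [dif_pos ha, dif_pos hb]
          exact u.toOrderHom.monotone hab'
        · simp only [dif_pos ha, dif_neg hb]
          refine le_trans (u.toOrderHom.monotone
            (show (⟨(a : ℕ), _⟩ : Fin (k+1)) ≤ Fin.last k from by
              simp only [Fin.le_def, Fin.last]; exact ha)) ?_
          rw [huv]
          exact v.toOrderHom.monotone (by simp [Fin.le_def])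
        · exact absurd (le_trans hab' hb) ha
        · simp only [dif_neg ha, dif_neg hb]
          exact v.toOrderHom.monotone (by simp only [Fin.le_def]; omega) }

lemma desc_apply_le {X : SimplexCategory} (u : SimplexCategory.mk k ⟶ X)
    (v : SimplexCategory.mk l ⟶ X) (huv) (i : Fin (k + l + 1)) (h : (i : ℕ) ≤ k) :
    (desc k l u v huv).toOrderHom i =
      u.toOrderHom ⟨(i : ℕ), by show (i : ℕ) < k + 1; omega⟩ :=
  dif_pos h

lemma desc_apply_gt {X : SimplexCategory} (u : SimplexCategory.mk k ⟶ X)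
    (v : SimplexCategory.mk l ⟶ X) (huv) (i : Fin (k + l + 1)) (h : ¬ (i : ℕ) ≤ k) :
    (desc k l u v huv).toOrderHom i = v.toOrderHom ⟨(i : ℕ) - k, by
      show (i : ℕ) - k < l + 1
      have hi : (i : ℕ) < k + l + 1 := i.isLt
      omega⟩ :=
  dif_neg h

/-- the pushout cocone is colimiting -/
def pushoutIsColimit : IsColimit (PushoutCocone.mk (inl k l) (inr k l) (comm k l)) := by
  refine PushoutCocone.IsColimit.mk _
    (fun s => desc k l s.inl s.inr (point_eq k l s.inl s.inr s.condition))
    (fun s => ?_) (fun s => ?_) (fun s m h1 h2 => ?_)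
  · apply SimplexCategory.Hom.ext
    ext i
    dsimp only
    rw [apply_comp]
    have hik : (i : ℕ) < k + 1 := i.isLt
    have hle : (((inl k l).toOrderHom i : Fin (k + l + 1)) : ℕ) ≤ k := by
      show ((i.castLE (by omega : k + 1 ≤ k + l + 1) : Fin (k + l + 1)) : ℕ) ≤ k
      simp [Fin.castLE]; omega
    rw [desc_apply_le k l _ _ _ _ hle]
    rfl
  · apply SimplexCategory.Hom.ext
    ext i
    dsimp only
    rw [apply_comp]
    have hil : (i : ℕ) < l + 1 := i.isLt
    have happ : ((inr k l).toOrderHom i : Fin (k + l + 1)) =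
        ⟨k + (i : ℕ), by show k + (i : ℕ) < k + l + 1; omega⟩ := rfl
    rw [happ]
    by_cases h0 : (i : ℕ) = 0
    · have hle : ((⟨k + (i : ℕ), by omega⟩ : Fin (k+l+1)) : ℕ) ≤ k := by simp [h0]
      rw [desc_apply_le k l _ _ _ _ hle]
      have e1 : (⟨((⟨k + (i : ℕ), by omega⟩ : Fin (k+l+1)) : ℕ), by
          show ((⟨k + (i : ℕ), by omega⟩ : Fin (k+l+1)) : ℕ) < k + 1; simp [h0]⟩ : Fin (k+1))
          = Fin.last k := by apply Fin.ext; simp [h0, Fin.last]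
      have e2 : i = (0 : Fin (l + 1)) := Fin.ext (by simpa using h0)
      rw [show (⟨((⟨k + (i : ℕ), by omega⟩ : Fin (k+l+1)) : ℕ), _⟩ : Fin (k+1)) = Fin.last k
        from e1, point_eq k l s.inl s.inr s.condition, e2]
    · have hgt : ¬ ((⟨k + (i : ℕ), by omega⟩ : Fin (k+l+1)) : ℕ) ≤ k := by show ¬ (k + (i : ℕ) ≤ k); omega
      rw [desc_apply_gt k l _ _ _ _ hgt]
      congr 1
      apply Fin.ext
      simp
  · apply SimplexCategory.Hom.ext
    ext i
    dsimp only
    have hi : (i : ℕ) < k + l + 1 := i.isLt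
    by_cases h : (i : ℕ) ≤ k
    · rw [desc_apply_le k l _ _ _ _ h]
      have := hom_congr h1 (⟨(i : ℕ), by show (i : ℕ) < k + 1; omega⟩ : Fin (k+1))
      rw [apply_comp] at this
      have e : ((inl k l).toOrderHom (⟨(i : ℕ), by show (i : ℕ) < k + 1; omega⟩ : Fin (k+1))) =
          i := by apply Fin.ext; rfl
      rw [e] at this
      rw [this]
    · rw [desc_apply_gt k l _ _ _ _ h]
      have := hom_congr h2 (⟨(i : ℕ) - k, by show (i : ℕ) - k < l + 1; omega⟩ : Fin (l+1))
      rw [apply_comp] at this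
      have e : ((inr k l).toOrderHom (⟨(i : ℕ) - k, by
          show (i : ℕ) - k < l + 1; omega⟩ : Fin (l+1))) = i := by
        apply Fin.ext
        show k + ((i : ℕ) - k) = (i : ℕ)
        omega
      rw [e] at this
      rw [this]

/-- the pullback cone is limiting -/
def pullbackIsLimit :
    IsLimit (PullbackCone.mk
      (SimplexCategory.const (SimplexCategory.mk 0) (SimplexCategory.mk k) (Fin.last k))
      (SimplexCategory.const (SimplexCategory.mk 0) (SimplexCategory.mk l) 0) (comm k l)) := by
  have key : ∀ (s : PullbackCone (inl k l) (inr k l)) (w : Fin (s.pt.len + 1)),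
      ((s.fst.toOrderHom w : Fin (k+1)) : ℕ) = k ∧ ((s.snd.toOrderHom w : Fin (l+1)) : ℕ) = 0 := by
    intro s w
    have h := hom_congr s.condition w
    rw [apply_comp, apply_comp] at h
    have h' : (((s.fst.toOrderHom w).castLE (by omega : k + 1 ≤ k + l + 1) : Fin (k+l+1)) : ℕ) =
        ((⟨k + ((s.snd.toOrderHom w : Fin (l+1)) : ℕ), by
          have hw : ((s.snd.toOrderHom w : Fin (l+1)) : ℕ) < l + 1 := (s.snd.toOrderHom w).isLt
          omega⟩ : Fin (k+l+1)) : ℕ) := congrArg Fin.val h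
    simp only [Fin.coe_castLE] at h'
    have h2 : ((s.fst.toOrderHom w : Fin (k+1)) : ℕ) < k + 1 := (s.fst.toOrderHom w).isLt
    constructor <;> omega
  refine PullbackCone.IsLimit.mk _
    (fun s => SimplexCategory.const s.pt (SimplexCategory.mk 0) 0)
    (fun s => ?_) (fun s => ?_) (fun s m _ _ => ?_)
  · apply SimplexCategory.Hom.ext
    ext w
    dsimp only
    rw [apply_comp]
    show (Fin.last k : ℕ) = ((s.fst.toOrderHom w : Fin (k+1)) : ℕ)
    rw [(key s w).1]
    simp [Fin.last]
  · apply SimplexCategory.Hom.ext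
    ext w
    dsimp only
    rw [apply_comp]
    show ((0 : Fin (l + 1)) : ℕ) = ((s.snd.toOrderHom w : Fin (l+1)) : ℕ)
    rw [(key s w).2]
    simp
  · apply SimplexCategory.Hom.ext
    ext w
    exact congrArg Fin.val (Subsingleton.elim (α := Fin 1) _ _)

end Stmt16Aux

open Stmt16Aux in
/-- In the simplex category `Δ`, for `0 ≤ k ≤ n` (writing `n = k + l`), the
square consisting of `[n]`, the subobjects `{0,...,k} ≅ [k]` and `{k,...,n} ≅ [l]`, and their
intersection `{k} ≅ [0]` — with the inclusions `[k] → [n]` (`i ↦ i`), `[l] → [n]`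
(`i ↦ i + k`), and `[0] → [k]`, `[0] → [l]` hitting `k` and `0` respectively — is both a
pushout and a pullback square in `Δ` (a biCartesian square). -/
theorem stmt_16 (k l : ℕ) :
    IsPushout
        (SimplexCategory.const (SimplexCategory.mk 0) (SimplexCategory.mk k) (Fin.last k))
        (SimplexCategory.const (SimplexCategory.mk 0) (SimplexCategory.mk l) 0)
        (SimplexCategory.mkHom
          ⟨Fin.castLE (by omega : k + 1 ≤ k + l + 1), fun _ _ h => h⟩)
        (SimplexCategory.mkHom
          ⟨fun i : Fin (l + 1) => (⟨k + (i : ℕ), by have := i.isLt; omega⟩ : Fin (k + l + 1)),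
            fun a b hab => Nat.add_le_add_left hab k⟩) ∧
      IsPullback
        (SimplexCategory.const (SimplexCategory.mk 0) (SimplexCategory.mk k) (Fin.last k))
        (SimplexCategory.const (SimplexCategory.mk 0) (SimplexCategory.mk l) 0)
        (SimplexCategory.mkHom
          ⟨Fin.castLE (by omega : k + 1 ≤ k + l + 1), fun _ _ h => h⟩)
        (SimplexCategory.mkHom
          ⟨fun i : Fin (l + 1) => (⟨k + (i : ℕ), by have := i.isLt; omega⟩ : Fin (k + l + 1)),
            fun a b hab => Nat.add_le_add_left hab k⟩) := by
  exact ⟨IsPushout.of_isColimit (pushoutIsColimit k l),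
    IsPullback.of_isLimit (pullbackIsLimit k l)⟩
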